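/- Let m ≥ 2 and i ≥ 2 be integers. For every n ≥ 1, b_{i,0}(2,n) = b_{i−1,0}(2,n) + Σ_{u=0}^{i−1} b_{u,0}(2, n−mⁱ)·b_m(m^{i−u} − m) + b_{i,0}(2, n−mⁱ), where b_{u,0}(2,s) = 0 for s < 0 and b_{u,0}(2,0) = 1, and b_m(0) = 1. -/

import Mathlib

/-- A rectangle with integer corners: `(a, b, c, d)` represents `[a,b] × [c,d] ⊆ ℝ²`
(with `a < b`, `c < d` required in `IsTiling`). -/
abbrev Rect : Type := ℕ × ℕ × ℕ × ℕ

/-- The unit cell `[i,i+1] × [j,j+1]` lies inside the rectangle `R`. -/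
def cellIn (R : Rect) (i j : ℕ) : Prop :=
  R.1 ≤ i ∧ i < R.2.1 ∧ R.2.2.1 ≤ j ∧ j < R.2.2.2

/-- `T` is a tiling of `[0,m] × [0,n]`: each rectangle has positive integer side lengths
and lies inside `[0,m] × [0,n]`, and every unit cell of `[0,m] × [0,n]` is covered by
exactly one rectangle of `T` (equivalently, the rectangles have pairwise disjoint
interiors and their union is `[0,m] × [0,n]`). -/
def IsTiling (m n : ℕ) (T : Finset Rect) : Prop :=
  (∀ R ∈ T, R.1 < R.2.1 ∧ R.2.1 ≤ m ∧ R.2.2.1 < R.2.2.2 ∧ R.2.2.2 ≤ n) ∧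
  ∀ i < m, ∀ j < n, ∃! R, R ∈ T ∧ cellIn R i j

/-- The block of a rectangle: the unordered pair of its side lengths,
recorded as a sorted pair `(min, max)`. -/
def blockOf (R : Rect) : ℕ × ℕ :=
  (min (R.2.1 - R.1) (R.2.2.2 - R.2.2.1), max (R.2.1 - R.1) (R.2.2.2 - R.2.2.1))

/-- The block multiset of a tiling. -/
def blocksOf (T : Finset Rect) : Multiset (ℕ × ℕ) := T.val.map blockOf

/-- The number of distinct block multisets of tilings of `[0,m] × [0,n]` all of whose
blocks satisfy the predicate `allowed` (as sorted pairs of side lengths). -/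
noncomputable def rectPA (m n : ℕ) (allowed : ℕ × ℕ → Prop) : ℕ :=
  Nat.card {M : Multiset (ℕ × ℕ) |
    ∃ T : Finset Rect, IsTiling m n T ∧ blocksOf T = M ∧ ∀ b ∈ M, allowed b}

/-- The rectangular partition function `p(m,n)`: the number of distinct block multisets
of tilings of `[0,m] × [0,n]`. -/
noncomputable def rectP (m n : ℕ) : ℕ :=
  Nat.card {M : Multiset (ℕ × ℕ) | ∃ T : Finset Rect, IsTiling m n T ∧ blocksOf T = M}

/-- The Euler partition function `p(n)`. -/
def eulerP (n : ℕ) : ℕ := Fintype.card (Nat.Partition n)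

/-- `p_{k,l}(2,n)`: the number of distinct block multisets of tilings of `[0,2] × [0,n]`
using only blocks with side lengths `{1,i}` for `1 ≤ i ≤ k` or `{2,j}` for `2 ≤ j ≤ l`. -/
noncomputable def pkl (k l n : ℕ) : ℕ :=
  rectPA 2 n (fun b => (b.1 = 1 ∧ 1 ≤ b.2 ∧ b.2 ≤ k) ∨ (b.1 = 2 ∧ 2 ≤ b.2 ∧ b.2 ≤ l))

/-- `b_{i,0}(2,n)`: the number of block multisets of tilings of `[0,2] × [0,n]` using
only blocks of side lengths `{1, m^t}` for some `0 ≤ t ≤ i`. -/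
noncomputable def bi0 (m i n : ℕ) : ℕ :=
  rectPA 2 n (fun b => b.1 = 1 ∧ ∃ t ≤ i, b.2 = m ^ t)

/-- `b_{i,0}(2,·)` extended by `0` to negative integers. -/
noncomputable def bi0Z (m i : ℕ) (s : ℤ) : ℤ := if s < 0 then 0 else (bi0 m i s.toNat : ℤ)

/-- The `m`-ary partition function `b_m(n)`. -/
noncomputable def mary (m n : ℕ) : ℕ :=
  Nat.card {lam : Nat.Partition n // ∀ i ∈ lam.parts, ∃ t : ℕ, i = m ^ t}



namespace BiRec

/-- multiset parts are powers of m with exponent ≤ i -/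
def PW (m i : ℕ) (M : Multiset ℕ) : Prop := ∀ x ∈ M, ∃ t ≤ i, x = m ^ t

/-- tileability of 2×n as a multiset condition -/
def Til (n : ℕ) (M : Multiset ℕ) : Prop :=
  ∃ A B k, M = A + B + Multiset.replicate k 2 ∧ A.sum + k = n ∧ B.sum + k = n

def GS (m i n : ℕ) : Set (Multiset ℕ) := {M | PW m i M ∧ Til n M}

lemma til_sum {n M} (h : Til n M) : M.sum = 2 * n := by
  obtain ⟨A, B, k, rfl, hA, hB⟩ := h
  simp [Multiset.sum_replicate]
  omega

lemma pw_pos {m i M} (hm : 2 ≤ m) (h : PW m i M) {x} (hx : x ∈ M) : 0 < x := by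
  obtain ⟨t, _, rfl⟩ := h x hx
  exact pow_pos (by omega) t

/-- The greedy subset-sum lemma: from a multiset of powers of m all dividing c,
with sum ≥ c, extract a sub-multiset summing exactly to c. -/
lemma greedy (m : ℕ) (hm : 2 ≤ m) :
    ∀ (S : Multiset ℕ) (c : ℕ), (∀ q ∈ S, ∃ t : ℕ, q = m ^ t) → (∀ q ∈ S, q ∣ c) →
      c ≤ S.sum → ∃ E ≤ S, E.sum = c := by
  intro S
  induction S using Multiset.strongInductionOn with
  | ih S ih =>
    intro c hpow hdvd hsum
    rcases Nat.eq_zero_or_pos c with rfl | hc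
    · exact ⟨0, Multiset.zero_le S, rfl⟩
    have hS : S ≠ 0 := by
      rintro rfl; simp at hsum; omega
    -- max element
    have hne : S.toFinset.Nonempty := by
      simpa [Multiset.toFinset_nonempty] using hS
    obtain ⟨p, hpF, hpmax⟩ := S.toFinset.exists_max_image id hne
    have hpS : p ∈ S := Multiset.mem_toFinset.1 hpF
    have hmax : ∀ q ∈ S, q ≤ p := fun q hq => hpmax q (Multiset.mem_toFinset.2 hq)
    have hpd : p ∣ c := hdvd p hpS
    have hpc : p ≤ c := Nat.le_of_dvd hc hpd
    have hcard : S.erase p < S := Multiset.erase_lt.2 hpS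
    have hrec := ih (S.erase p) hcard (c - p)
    obtain ⟨pt, hppow⟩ := hpow p hpS
    have hdvd' : ∀ q ∈ S.erase p, q ∣ c - p := by
      intro q hq
      have hqS := Multiset.mem_of_mem_erase hq
      obtain ⟨qt, rfl⟩ := hpow q hqS
      have hqp : m ^ qt ∣ p := by
        subst hppow
        have : qt ≤ pt := by
          have := hmax _ hqS
          exact (pow_le_pow_iff_right₀ (by omega)).1 this
        exact pow_dvd_pow m this
      exact Nat.dvd_sub (hdvd _ hqS) hqp
    have hsum' : c - p ≤ (S.erase p).sum := by
      have := Multiset.sum_erase hpS  -- maybe name wrong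
      omega
    obtain ⟨E', hE'le, hE'sum⟩ := hrec
      (fun q hq => hpow q (Multiset.mem_of_mem_erase hq)) hdvd' hsum'
    refine ⟨p ::ₘ E', ?_, ?_⟩
    · calc p ::ₘ E' ≤ p ::ₘ S.erase p := Multiset.cons_le_cons _ hE'le
      _ = S := Multiset.cons_erase hpS
    · simp [hE'sum]; omega


/-! ### Geometry: rowRects -/

def rowRects (x1 x2 : ℕ) : List ℕ → ℕ → List Rect
  | [], _ => []
  | l :: ls, off => (x1, x2, off, off + l) :: rowRects x1 x2 ls (off + l)

lemma rowRects_mem {x1 x2 : ℕ} : ∀ {ls : List ℕ} {off : ℕ} {R : Rect},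
    R ∈ rowRects x1 x2 ls off → (∀ l ∈ ls, 0 < l) →
    R.1 = x1 ∧ R.2.1 = x2 ∧ off ≤ R.2.2.1 ∧ R.2.2.1 < R.2.2.2 ∧
      R.2.2.2 ≤ off + ls.sum ∧ (R.2.2.2 - R.2.2.1) ∈ ls := by
  intro ls
  induction ls with
  | nil => intro off R h; simp [rowRects] at h
  | cons l ls ih =>
    intro off R h hpos
    rcases (List.mem_cons).1 h with rfl | h
    · have hl : 0 < l := hpos l (by simp)
      refine ⟨rfl, rfl, le_rfl, by simp [hl], by simp only [List.sum_cons]; omega, by simp⟩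
    · obtain ⟨h1, h2, h3, h4, h5, h6⟩ := ih h (fun l hl => hpos l (by simp [hl]))
      have hl : 0 < l := hpos l (by simp)
      exact ⟨h1, h2, by omega, h4, by simp only [List.sum_cons]; omega, by simp [h6]⟩

lemma rowRects_map_blockOf' {x1 x2 : ℕ} (f : Rect → ℕ × ℕ)
    (hf : ∀ a b c d : ℕ, f (a,b,c,d) = (min (b-a) (d-c), max (b-a) (d-c))) :
    ∀ (ls : List ℕ) (off : ℕ),
    (rowRects x1 x2 ls off).map f = ls.map (fun l => (min (x2-x1) l, max (x2-x1) l)) := by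
  intro ls
  induction ls with
  | nil => intro off; simp [rowRects]
  | cons l ls ih =>
    intro off
    simp only [rowRects, List.map_cons, ih, hf]
    congr 2 <;> simp

lemma rowRects_cover_ex {x1 x2 : ℕ} : ∀ {ls : List ℕ} {off j : ℕ},
    off ≤ j → j < off + ls.sum →
    ∃ R ∈ rowRects x1 x2 ls off, R.2.2.1 ≤ j ∧ j < R.2.2.2 := by
  intro ls
  induction ls with
  | nil => intro off j h1 h2; simp at h2; omega
  | cons l ls ih =>
    intro off j h1 h2
    by_cases hj : j < off + l
    · exact ⟨(x1,x2,off,off+l), by simp [rowRects], h1, hj⟩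
    · obtain ⟨R, hR, hc⟩ := ih (off := off + l) (j := j) (by omega) (by simp at h2 ⊢; omega)
      exact ⟨R, by simp [rowRects, hR], hc⟩

lemma rowRects_cover_uniq {x1 x2 : ℕ} : ∀ {ls : List ℕ} {off j : ℕ} {R R' : Rect},
    (∀ l ∈ ls, 0 < l) →
    R ∈ rowRects x1 x2 ls off → R' ∈ rowRects x1 x2 ls off →
    R.2.2.1 ≤ j → j < R.2.2.2 → R'.2.2.1 ≤ j → j < R'.2.2.2 → R = R' := by
  intro ls
  induction ls with
  | nil => intro off j R R' _ h; simp [rowRects] at h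
  | cons l ls ih =>
    intro off j R R' hpos hR hR' hc1 hc2 hc1' hc2'
    have hpos' : ∀ l ∈ ls, 0 < l := fun l hl => hpos l (by simp [hl])
    rcases (List.mem_cons).1 hR with rfl | hR <;> rcases (List.mem_cons).1 hR' with rfl | hR'
    · rfl
    · exfalso
      have := (rowRects_mem hR' hpos').2.2.1
      simp at hc2; omega
    · exfalso
      have := (rowRects_mem hR hpos').2.2.1
      simp at hc2'; omega
    · exact ih hpos' hR hR' hc1 hc2 hc1' hc2'

lemma rowRects_nodup {x1 x2 : ℕ} : ∀ {ls : List ℕ} {off : ℕ},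
    (∀ l ∈ ls, 0 < l) → (rowRects x1 x2 ls off).Nodup := by
  intro ls
  induction ls with
  | nil => intro off _; simp [rowRects]
  | cons l ls ih =>
    intro off hpos
    have hpos' : ∀ l ∈ ls, 0 < l := fun l hl => hpos l (by simp [hl])
    refine List.Nodup.cons ?_ (ih hpos')
    intro hmem
    have := (rowRects_mem hmem hpos').2.2.1
    have hl : 0 < l := hpos l (by simp)
    simp at this; omega


lemma blockOf_mk (a b c d : ℕ) :
    blockOf (a,b,c,d) = (min (b-a) (d-c), max (b-a) (d-c)) := rfl

lemma construct {m i n : ℕ} (hm : 2 ≤ m) {L : Multiset ℕ} (hL : L ∈ GS m i n) :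
    ∃ T : Finset Rect, IsTiling 2 n T ∧ blocksOf T = L.map (fun l => (1, l)) := by
  obtain ⟨hpw, A, B, k, rfl, hA, hB⟩ := hL
  have hApos : ∀ l ∈ A, 0 < l := fun l hl =>
    pw_pos hm hpw (by simp [hl])
  have hBpos : ∀ l ∈ B, 0 < l := fun l hl =>
    pw_pos hm hpw (by simp [hl])
  have hk : k ≤ n := by omega
  set a := A.toList with ha
  set b := B.toList with hb
  have hasum : a.sum = A.sum := by rw [ha]; exact Multiset.sum_toList A
  have hbsum : b.sum = B.sum := by rw [hb]; exact Multiset.sum_toList B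
  have hapos : ∀ l ∈ a, 0 < l := fun l hl => hApos l (by rwa [← Multiset.mem_toList])
  have hbpos : ∀ l ∈ b, 0 < l := fun l hl => hBpos l (by rwa [← Multiset.mem_toList])
  have hrpos : ∀ l ∈ List.replicate k 1, 0 < l := by
    intro l hl; rcases List.eq_of_mem_replicate hl with rfl; omega
  set L1 := rowRects 0 1 a 0 with hL1
  set L2 := rowRects 1 2 b 0 with hL2
  set L3 := rowRects 0 2 (List.replicate k 1) (n - k) with hL3
  have hrsum : (List.replicate k 1).sum = k := by simp
  -- membership facts
  have hm1 : ∀ R ∈ L1, R.1 = 0 ∧ R.2.1 = 1 ∧ 0 ≤ R.2.2.1 ∧ R.2.2.1 < R.2.2.2 ∧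
      R.2.2.2 ≤ n - k ∧ (R.2.2.2 - R.2.2.1) ∈ a := by
    intro R hR
    have := rowRects_mem hR hapos
    simpa [hasum, show 0 + A.sum = n - k by omega] using this
  have hm2 : ∀ R ∈ L2, R.1 = 1 ∧ R.2.1 = 2 ∧ 0 ≤ R.2.2.1 ∧ R.2.2.1 < R.2.2.2 ∧
      R.2.2.2 ≤ n - k ∧ (R.2.2.2 - R.2.2.1) ∈ b := by
    intro R hR
    have := rowRects_mem hR hbpos
    simpa [hbsum, show 0 + B.sum = n - k by omega] using this
  have hm3 : ∀ R ∈ L3, R.1 = 0 ∧ R.2.1 = 2 ∧ n - k ≤ R.2.2.1 ∧ R.2.2.1 < R.2.2.2 ∧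
      R.2.2.2 ≤ n := by
    intro R hR
    have h := rowRects_mem hR hrpos
    have h5 := h.2.2.2.2.1
    rw [hrsum] at h5
    exact ⟨h.1, h.2.1, h.2.2.1, h.2.2.2.1, by omega⟩
  set LL := L1 ++ L2 ++ L3 with hLL
  have hnd : LL.Nodup := by
    refine List.Nodup.append (List.Nodup.append ?_ ?_ ?_) ?_ ?_
    · exact rowRects_nodup hapos
    · exact rowRects_nodup hbpos
    · intro R h1 h2
      have := (hm1 R h1).1; have := (hm2 R h2).1; omega
    · exact rowRects_nodup hrpos
    · intro R h1 h3
      have h3' := hm3 R h3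
      rcases List.mem_append.1 h1 with h | h
      · have := (hm1 R h).2.1; have := h3'.2.1; omega
      · have := (hm2 R h).1; have := h3'.1; omega
  refine ⟨LL.toFinset, ⟨?_, ?_⟩, ?_⟩
  · -- bounds
    intro R hR
    rw [List.mem_toFinset] at hR
    rcases List.mem_append.1 hR with h | h3
    · rcases List.mem_append.1 h with h1 | h2
      · obtain ⟨e1, e2, _, e4, e5, _⟩ := hm1 R h1; omega
      · obtain ⟨e1, e2, _, e4, e5, _⟩ := hm2 R h2; omega
    · obtain ⟨e1, e2, _, e4, e5⟩ := hm3 R h3; omega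
  · -- exactly one
    intro x hx j hj
    -- helper: membership split
    have memsplit : ∀ R : Rect, R ∈ LL.toFinset ↔ R ∈ L1 ∨ R ∈ L2 ∨ R ∈ L3 := by
      intro R
      rw [List.mem_toFinset, hLL]
      simp [List.mem_append, or_assoc]
    interval_cases x
    · -- x = 0 : row 0 or vertical
      by_cases hjk : j < n - k
      · obtain ⟨R, hR, hc1, hc2⟩ := rowRects_cover_ex (x1 := 0) (x2 := 1)
          (ls := a) (off := 0) (j := j) (by omega) (by rw [hasum]; omega)
        refine ⟨R, ⟨(memsplit R).2 (Or.inl hR), ?_⟩, ?_⟩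
        · obtain ⟨e1, e2, _⟩ := hm1 R hR
          exact ⟨by omega, by omega, hc1, hc2⟩
        · rintro R' ⟨hR', hc'⟩
          rcases (memsplit R').1 hR' with h | h | h
          · exact rowRects_cover_uniq hapos h hR hc'.2.2.1 hc'.2.2.2 hc1 hc2
          · have := (hm2 R' h).1
            obtain ⟨hx1, _, _⟩ := hc'; omega
          · have := (hm3 R' h).2.2.1
            obtain ⟨_, _, hy1, hy2⟩ := hc'; omega
      · obtain ⟨R, hR, hc1, hc2⟩ := rowRects_cover_ex (x1 := 0) (x2 := 2)
          (ls := List.replicate k 1) (off := n - k) (j := j) (by omega)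
          (by rw [hrsum]; omega)
        refine ⟨R, ⟨(memsplit R).2 (Or.inr (Or.inr hR)), ?_⟩, ?_⟩
        · obtain ⟨e1, e2, _⟩ := hm3 R hR
          exact ⟨by omega, by omega, hc1, hc2⟩
        · rintro R' ⟨hR', hc'⟩
          rcases (memsplit R').1 hR' with h | h | h
          · have := (hm1 R' h).2.2.2.2.1
            obtain ⟨_, _, hy1, hy2⟩ := hc'; omega
          · have := (hm2 R' h).1
            obtain ⟨hx1, _, _⟩ := hc'; omega
          · exact rowRects_cover_uniq hrpos h hR hc'.2.2.1 hc'.2.2.2 hc1 hc2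
    · -- x = 1 : row 1 or vertical
      by_cases hjk : j < n - k
      · obtain ⟨R, hR, hc1, hc2⟩ := rowRects_cover_ex (x1 := 1) (x2 := 2)
          (ls := b) (off := 0) (j := j) (by omega) (by rw [hbsum]; omega)
        refine ⟨R, ⟨(memsplit R).2 (Or.inr (Or.inl hR)), ?_⟩, ?_⟩
        · obtain ⟨e1, e2, _⟩ := hm2 R hR
          exact ⟨by omega, by omega, hc1, hc2⟩
        · rintro R' ⟨hR', hc'⟩
          rcases (memsplit R').1 hR' with h | h | h
          · have := (hm1 R' h).2.1
            obtain ⟨_, hx2, _⟩ := hc'; omega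
          · exact rowRects_cover_uniq hbpos h hR hc'.2.2.1 hc'.2.2.2 hc1 hc2
          · have := (hm3 R' h).2.2.1
            obtain ⟨_, _, hy1, hy2⟩ := hc'; omega
      · obtain ⟨R, hR, hc1, hc2⟩ := rowRects_cover_ex (x1 := 0) (x2 := 2)
          (ls := List.replicate k 1) (off := n - k) (j := j) (by omega)
          (by rw [hrsum]; omega)
        refine ⟨R, ⟨(memsplit R).2 (Or.inr (Or.inr hR)), ?_⟩, ?_⟩
        · obtain ⟨e1, e2, _⟩ := hm3 R hR
          exact ⟨by omega, by omega, hc1, hc2⟩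
        · rintro R' ⟨hR', hc'⟩
          rcases (memsplit R').1 hR' with h | h | h
          · have := (hm1 R' h).2.1
            obtain ⟨_, hx2, _⟩ := hc'; omega
          · have := (hm2 R' h).2.2.2.2.1
            obtain ⟨_, _, hy1, hy2⟩ := hc'; omega
          · exact rowRects_cover_uniq hrpos h hR hc'.2.2.1 hc'.2.2.2 hc1 hc2
  · -- blocksOf
    have hval : (LL.toFinset).val = (LL : Multiset Rect) := by
      have : (LL : Multiset Rect).Nodup := hnd
      simp [List.toFinset, Multiset.toFinset, Multiset.dedup_eq_self.2 this]
    rw [blocksOf, hval, hLL]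
    have key := rowRects_map_blockOf' (x1 := 0) (x2 := 1) blockOf
      (fun a b c d => rfl)
    have key2 := rowRects_map_blockOf' (x1 := 1) (x2 := 2) blockOf
      (fun a b c d => rfl)
    have key3 := rowRects_map_blockOf' (x1 := 0) (x2 := 2) blockOf
      (fun a b c d => rfl)
    have e1 : L1.map blockOf = a.map (fun l => (1, l)) := by
      rw [hL1, key a 0]
      refine List.map_congr_left ?_
      intro l hl
      have hp := hapos l hl
      simp only [Nat.sub_zero, Prod.mk.injEq]
      omega
    have e2 : L2.map blockOf = b.map (fun l => (1, l)) := by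
      rw [hL2, key2 b 0]
      refine List.map_congr_left ?_
      intro l hl
      have hp := hbpos l hl
      simp only [Prod.mk.injEq]
      omega
    have e3 : L3.map blockOf = List.replicate k ((1 : ℕ), (2 : ℕ)) := by
      rw [hL3, key3]
      simp
    have hsplit : (↑(L1 ++ L2 ++ L3) : Multiset Rect) = (↑L1 : Multiset Rect) + ↑L2 + ↑L3 := by
      simp
    rw [hsplit, Multiset.map_add, Multiset.map_add, Multiset.map_coe, Multiset.map_coe,
      Multiset.map_coe, e1, e2, e3, Multiset.map_add, Multiset.map_add]
    congr 1
    · congr 1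
      · conv_rhs => rw [← Multiset.coe_toList A]
        rw [Multiset.map_coe]
      · conv_rhs => rw [← Multiset.coe_toList B]
        rw [Multiset.map_coe]
    · simp [Multiset.map_replicate, ← Multiset.coe_replicate]


lemma row_count {n : ℕ} {T : Finset Rect} (hT : IsTiling 2 n T) (x : ℕ) (hx : x < 2) :
    ∑ R ∈ T.filter (fun R => R.1 ≤ x ∧ x < R.2.1), (R.2.2.2 - R.2.2.1) = n := by
  classical
  set F := T.filter (fun R => R.1 ≤ x ∧ x < R.2.1) with hF
  have hun : F.biUnion (fun R => Finset.Ico R.2.2.1 R.2.2.2) = Finset.range n := by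
    ext j
    simp only [Finset.mem_biUnion, Finset.mem_Ico, Finset.mem_range, hF, Finset.mem_filter]
    constructor
    · rintro ⟨R, ⟨hRT, _, _⟩, _, hj2⟩
      have := (hT.1 R hRT).2.2.2
      omega
    · intro hj
      obtain ⟨R, ⟨hRT, hcell⟩, _⟩ := hT.2 x hx j hj
      exact ⟨R, ⟨hRT, hcell.1, hcell.2.1⟩, hcell.2.2.1, hcell.2.2.2⟩
  have hdisj : ∀ R1 ∈ F, ∀ R2 ∈ F, R1 ≠ R2 →
      Disjoint (Finset.Ico R1.2.2.1 R1.2.2.2) (Finset.Ico R2.2.2.1 R2.2.2.2) := by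
    intro R1 h1 R2 h2 hne
    rw [Finset.disjoint_left]
    intro j hj1 hj2
    apply hne
    rw [Finset.mem_Ico] at hj1 hj2
    have h1' := Finset.mem_filter.1 h1
    have h2' := Finset.mem_filter.1 h2
    have hjn : j < n := by
      have := (hT.1 R1 h1'.1).2.2.2
      omega
    obtain ⟨R, -, huniq⟩ := hT.2 x hx j hjn
    have e1 := huniq R1 ⟨h1'.1, h1'.2.1, h1'.2.2, hj1.1, hj1.2⟩
    have e2 := huniq R2 ⟨h2'.1, h2'.2.1, h2'.2.2, hj2.1, hj2.2⟩
    rw [e1, e2]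
  have := Finset.card_biUnion hdisj
  rw [hun, Finset.card_range] at this
  rw [this]
  refine Finset.sum_congr rfl ?_
  intro R _
  rw [Nat.card_Ico]

lemma extract {m i n : ℕ} (hm : 2 ≤ m) {T : Finset Rect} (hT : IsTiling 2 n T)
    (hall : ∀ b ∈ blocksOf T, b.1 = 1 ∧ ∃ t ≤ i, b.2 = m ^ t) :
    (blocksOf T).map Prod.snd ∈ GS m i n := by
  classical
  set g : Rect → ℕ := fun R => (blockOf R).2 with hg
  set L := (blocksOf T).map Prod.snd with hLdef
  have hLmap : L = T.val.map g := by
    rw [hLdef, blocksOf, Multiset.map_map]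
    rfl
  have hcl : ∀ R ∈ T, (R.1 = 0 ∧ R.2.1 = 1) ∨ (R.1 = 1 ∧ R.2.1 = 2) ∨
      (R.1 = 0 ∧ R.2.1 = 2 ∧ R.2.2.2 = R.2.2.1 + 1) := by
    intro R hR
    obtain ⟨h1, h2, h3, h4⟩ := hT.1 R hR
    have hb : blockOf R ∈ blocksOf T := Multiset.mem_map_of_mem _ hR
    have hone := (hall _ hb).1
    have hbo : (blockOf R).1 = min (R.2.1 - R.1) (R.2.2.2 - R.2.2.1) := rfl
    rw [hbo] at hone
    omega
  set M1 := T.val.filter (fun R => R.1 = 1) with hM1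
  set S := T.val.filter (fun R => ¬ R.1 = 1) with hS
  set M0 := S.filter (fun R => R.2.1 = 1) with hM0
  set MV := S.filter (fun R => ¬ R.2.1 = 1) with hMV
  have hTsplit : T.val = M1 + (M0 + MV) := by
    rw [hM0, hMV, Multiset.filter_add_not, hM1, hS, Multiset.filter_add_not]
  have hmemM1 : ∀ R ∈ M1, R ∈ T ∧ R.1 = 1 ∧ R.2.1 = 2 := by
    intro R hR
    rw [hM1, Multiset.mem_filter] at hR
    obtain ⟨hRT', hR1⟩ := hR
    have hRT : R ∈ T := Finset.mem_def.2 hRT'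
    rcases hcl R hRT with ⟨e1, e2⟩ | ⟨e1, e2⟩ | ⟨e1, e2, e3⟩
    · omega
    · exact ⟨hRT, hR1, e2⟩
    · omega
  have hmemM0 : ∀ R ∈ M0, R ∈ T ∧ R.1 = 0 ∧ R.2.1 = 1 := by
    intro R hR
    rw [hM0, Multiset.mem_filter, hS, Multiset.mem_filter] at hR
    obtain ⟨⟨hRT', h1⟩, h2⟩ := hR
    have hRT : R ∈ T := Finset.mem_def.2 hRT'
    rcases hcl R hRT with ⟨e1, e2⟩ | ⟨e1, e2⟩ | ⟨e1, e2, e3⟩ <;>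
      exact ⟨hRT, by omega, h2⟩
  have hmemMV : ∀ R ∈ MV, R ∈ T ∧ R.1 = 0 ∧ R.2.1 = 2 ∧ R.2.2.2 = R.2.2.1 + 1 := by
    intro R hR
    rw [hMV, Multiset.mem_filter, hS, Multiset.mem_filter] at hR
    obtain ⟨⟨hRT', h1⟩, h2⟩ := hR
    have hRT : R ∈ T := Finset.mem_def.2 hRT'
    rcases hcl R hRT with ⟨e1, e2⟩ | ⟨e1, e2⟩ | ⟨e1, e2, e3⟩
    · omega
    · omega
    · exact ⟨hRT, e1, e2, e3⟩
  set A := M0.map (fun R => R.2.2.2 - R.2.2.1) with hA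
  set B := M1.map (fun R => R.2.2.2 - R.2.2.1) with hB
  set k := Multiset.card MV with hk
  have hgM0 : M0.map g = A := by
    rw [hA]
    refine Multiset.map_congr rfl ?_
    intro R hR
    obtain ⟨hRT, e1, e2⟩ := hmemM0 R hR
    have hcd := (hT.1 R hRT).2.2.1
    have hbo : g R = max (R.2.1 - R.1) (R.2.2.2 - R.2.2.1) := rfl
    rw [hbo, e1, e2]
    omega
  have hgM1 : M1.map g = B := by
    rw [hB]
    refine Multiset.map_congr rfl ?_
    intro R hR
    obtain ⟨hRT, e1, e2⟩ := hmemM1 R hR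
    have hcd := (hT.1 R hRT).2.2.1
    have hbo : g R = max (R.2.1 - R.1) (R.2.2.2 - R.2.2.1) := rfl
    rw [hbo, e1, e2]
    omega
  have hgMV : MV.map g = Multiset.replicate k 2 := by
    rw [Multiset.eq_replicate]
    constructor
    · rw [Multiset.card_map, hk]
    · intro x hx
      rw [Multiset.mem_map] at hx
      obtain ⟨R, hR, rfl⟩ := hx
      obtain ⟨hRT, e1, e2, e3⟩ := hmemMV R hR
      have hbo : g R = max (R.2.1 - R.1) (R.2.2.2 - R.2.2.1) := rfl
      rw [hbo, e1, e2, e3]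
      omega
  have hMVlen : MV.map (fun R => R.2.2.2 - R.2.2.1) = Multiset.replicate k 1 := by
    rw [Multiset.eq_replicate]
    refine ⟨by rw [Multiset.card_map, hk], ?_⟩
    intro x hx
    rw [Multiset.mem_map] at hx
    obtain ⟨R, hR, rfl⟩ := hx
    obtain ⟨_, _, _, e3⟩ := hmemMV R hR
    omega
  have hLsplit : L = A + B + Multiset.replicate k 2 := by
    rw [hLmap, hTsplit, Multiset.map_add, Multiset.map_add, hgM0, hgM1, hgMV]
    abel
  have hrow0 : A.sum + k = n := by
    have hrc := row_count hT 0 (by omega)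
    have h2 : T.val.filter (fun R => R.1 ≤ 0 ∧ 0 < R.2.1)
        = T.val.filter (fun R => ¬ R.1 = 1) := by
      refine Multiset.filter_congr ?_
      intro R hR
      have := hT.1 R (Finset.mem_def.2 hR)
      omega
    have hFval : (T.filter (fun R => R.1 ≤ 0 ∧ 0 < R.2.1)).val = M0 + MV := by
      have h1 : (T.filter (fun R => R.1 ≤ 0 ∧ 0 < R.2.1)).val
          = T.val.filter (fun R => R.1 ≤ 0 ∧ 0 < R.2.1) := rfl
      rw [h1, h2, ← hS, hM0, hMV]
      exact (Multiset.filter_add_not _ S).symm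
    have hsum : ∑ R ∈ T.filter (fun R => R.1 ≤ 0 ∧ 0 < R.2.1), (R.2.2.2 - R.2.2.1)
        = A.sum + k := by
      rw [Finset.sum_eq_multiset_sum, hFval, Multiset.map_add, Multiset.sum_add, ← hA,
        hMVlen]
      simp
    rw [hsum] at hrc
    exact hrc
  have hrow1 : B.sum + k = n := by
    have hrc := row_count hT 1 (by omega)
    have h2 : T.val.filter (fun R => R.1 ≤ 1 ∧ 1 < R.2.1)
        = T.val.filter (fun R => R.2.1 = 2) := by
      refine Multiset.filter_congr ?_
      intro R hR
      have := hT.1 R (Finset.mem_def.2 hR)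
      omega
    have h3 : T.val.filter (fun R => R.2.1 = 2) = M1 + MV := by
      conv_lhs => rw [← Multiset.filter_add_not (fun R => R.1 = 1) T.val]
      rw [Multiset.filter_add]
      congr 1
      · rw [hM1]
        rw [Multiset.filter_filter]
        refine Multiset.filter_congr ?_
        intro R hR
        have hRT := Finset.mem_def.2 hR
        rcases hcl R hRT with ⟨e1, e2⟩ | ⟨e1, e2⟩ | ⟨e1, e2, e3⟩ <;> constructor <;>
          (intro h; omega) <;> omega
      · rw [hMV, hS, Multiset.filter_filter, Multiset.filter_filter]
        refine Multiset.filter_congr ?_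
        intro R hR
        have hRT := Finset.mem_def.2 hR
        rcases hcl R hRT with ⟨e1, e2⟩ | ⟨e1, e2⟩ | ⟨e1, e2, e3⟩ <;> constructor <;>
          (intro h; constructor) <;> omega
    have hFval : (T.filter (fun R => R.1 ≤ 1 ∧ 1 < R.2.1)).val = M1 + MV := by
      have h1 : (T.filter (fun R => R.1 ≤ 1 ∧ 1 < R.2.1)).val
          = T.val.filter (fun R => R.1 ≤ 1 ∧ 1 < R.2.1) := rfl
      rw [h1, h2, h3]
    have hsum : ∑ R ∈ T.filter (fun R => R.1 ≤ 1 ∧ 1 < R.2.1), (R.2.2.2 - R.2.2.1)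
        = B.sum + k := by
      rw [Finset.sum_eq_multiset_sum, hFval, Multiset.map_add, Multiset.sum_add, ← hB,
        hMVlen]
      simp
    rw [hsum] at hrc
    exact hrc
  refine ⟨?_, A, B, k, hLsplit, hrow0, hrow1⟩
  intro x hx
  rw [hLdef, Multiset.mem_map] at hx
  obtain ⟨b, hb, rfl⟩ := hx
  exact (hall b hb).2


lemma partA (m i n : ℕ) (hm : 2 ≤ m) : bi0 m i n = Nat.card (GS m i n) := by
  rw [bi0, rectPA]
  refine (Nat.card_congr (Equiv.ofBijective ?_ ⟨?_, ?_⟩)).symm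
  · refine fun L => ⟨(L : Multiset ℕ).map (fun l => ((1 : ℕ), l)), ?_⟩
    obtain ⟨T, hT, hb⟩ := construct hm L.2
    refine ⟨T, hT, hb, ?_⟩
    intro b hb'
    rw [Multiset.mem_map] at hb'
    obtain ⟨l, hl, rfl⟩ := hb'
    exact ⟨rfl, L.2.1 l hl⟩
  · intro L1 L2 h
    have := congrArg Subtype.val h
    simp only at this
    have hinj : Function.Injective (fun l : ℕ => ((1 : ℕ), l)) := by
      intro x y hxy
      simpa using hxy
    exact Subtype.ext (Multiset.map_injective hinj this)
  · rintro ⟨M, T, hT, rfl, hall⟩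
    refine ⟨⟨(blocksOf T).map Prod.snd, extract hm hT hall⟩, ?_⟩
    refine Subtype.ext ?_
    simp only [Multiset.map_map]
    conv_rhs => rw [← Multiset.map_id (blocksOf T)]
    refine Multiset.map_congr rfl ?_
    intro b hb
    have h1 := (hall b hb).1
    show ((1 : ℕ), b.2) = b
    rw [← h1]


/-! ### Part B : counting -/

def MaryP (m s : ℕ) : Set (Multiset ℕ) := {P | (∀ x ∈ P, ∃ t : ℕ, x = m ^ t) ∧ P.sum = s}

lemma sum_le_of_le {s t : Multiset ℕ} (h : s ≤ t) : s.sum ≤ t.sum := by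
  obtain ⟨u, rfl⟩ := Multiset.le_iff_exists_add.1 h
  simp

theorem gsFinite (m i n : ℕ) (hm : 2 ≤ m) : Finite ↥(GS m i n) := by
  refine Finite.of_injective (fun M => (⟨M.1, fun {x} hx => pw_pos hm M.2.1 hx,
    til_sum M.2.2⟩ : Nat.Partition (2 * n))) ?_
  intro M1 M2 h
  exact Subtype.ext (congrArg Nat.Partition.parts h)

lemma gs_finite {m i n : ℕ} (hm : 2 ≤ m) : (GS m i n).Finite := by
  have := gsFinite m i n hm
  exact Set.finite_coe_iff.1 this

lemma maryp_finite {m s : ℕ} (hm : 2 ≤ m) : (MaryP m s).Finite := by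
  rw [Set.finite_coe_iff.symm]
  refine Finite.of_injective (fun M => (⟨M.1, ?_, M.2.2⟩ : Nat.Partition s)) ?_
  · intro x hx
    obtain ⟨t, rfl⟩ := M.2.1 x hx
    exact pow_pos (by omega) t
  · intro M1 M2 h
    exact Subtype.ext (congrArg Nat.Partition.parts h)

lemma mary_eq (m s : ℕ) (hm : 2 ≤ m) : mary m s = Nat.card ↥(MaryP m s) := by
  rw [mary]
  refine Nat.card_congr ⟨fun lam => ⟨lam.1.parts, lam.2, lam.1.parts_sum⟩,
    fun P => ⟨⟨P.1, ?_, P.2.2⟩, P.2.1⟩, ?_, ?_⟩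
  · intro x hx
    obtain ⟨t, rfl⟩ := P.2.1 x hx
    exact pow_pos (by omega) t
  · intro lam
    refine Subtype.ext (Nat.Partition.ext rfl)
  · intro P
    rfl

lemma pow_mem_til {m i n k : ℕ} {M : Multiset ℕ} (hm : 2 ≤ m) (hik : 2 ≤ i)
    (hMgs : M ∈ GS m i n) (hmem : m ^ i ∈ M) : m ^ i ≤ n := by
  obtain ⟨hpw, A, B, k', rfl, hA, hB⟩ := hMgs
  have hp4 : 4 ≤ m ^ i := by
    calc 4 = 2 ^ 2 := rfl
    _ ≤ m ^ 2 := Nat.pow_le_pow_left hm 2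
    _ ≤ m ^ i := Nat.pow_le_pow_right (by omega) hik
  rw [Multiset.mem_add, Multiset.mem_add] at hmem
  rcases hmem with (h | h) | h
  · have := Multiset.single_le_sum (fun x _ => Nat.zero_le x) _ h
    omega
  · have := Multiset.single_le_sum (fun x _ => Nat.zero_le x) _ h
    omega
  · have := Multiset.eq_of_mem_replicate h
    omega

lemma class0_eq {m i n : ℕ} (hm : 2 ≤ m) (hi : 1 ≤ i) :
    {M ∈ GS m i n | M.count (m ^ i) = 0} = GS m (i - 1) n := by
  ext M
  simp only [Set.mem_setOf_eq, GS]
  constructor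
  · rintro ⟨⟨hpw, htil⟩, hc⟩
    refine ⟨?_, htil⟩
    intro x hx
    obtain ⟨t, ht, rfl⟩ := hpw x hx
    refine ⟨t, ?_, rfl⟩
    rcases Nat.lt_or_ge t i with h | h
    · omega
    · exfalso
      have : t = i := by omega
      subst this
      rw [Multiset.count_eq_zero] at hc
      exact hc hx
  · rintro ⟨hpw, htil⟩
    refine ⟨⟨?_, htil⟩, ?_⟩
    · intro x hx
      obtain ⟨t, ht, rfl⟩ := hpw x hx
      exact ⟨t, by omega, rfl⟩
    · rw [Multiset.count_eq_zero]
      intro hx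
      obtain ⟨t, ht, hpow⟩ := hpw _ hx
      have : t < i := by omega
      have hlt : m ^ t < m ^ i := Nat.pow_lt_pow_right (by omega) this
      omega

lemma class2_equiv {m i n : ℕ} (hm : 2 ≤ m) (hi : 2 ≤ i) (hpn : m ^ i ≤ n) :
    Nonempty (↥(GS m i (n - m ^ i)) ≃ ↥{M ∈ GS m i n | 2 ≤ M.count (m ^ i)}) := by
  set p := m ^ i with hp
  have hp4 : 4 ≤ p := by
    rw [hp]
    calc 4 = 2 ^ 2 := rfl
    _ ≤ m ^ 2 := Nat.pow_le_pow_left hm 2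
    _ ≤ m ^ i := Nat.pow_le_pow_right (by omega) hi
  have hrep2 : Multiset.replicate 2 p = {p} + {p} := by
    rw [show (2 : ℕ) = 1 + 1 from rfl, Multiset.replicate_add, Multiset.replicate_one]
  refine ⟨Equiv.ofBijective (fun M => ⟨M.1 + Multiset.replicate 2 p, ?_, ?_⟩) ⟨?_, ?_⟩⟩
  · -- membership in GS m i n
    obtain ⟨hpw, A, B, k, hsplit, hA, hB⟩ := M.2
    constructor
    · intro x hx
      rw [Multiset.mem_add] at hx
      rcases hx with h | h
      · exact hpw x h
      · have := Multiset.eq_of_mem_replicate h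
        exact ⟨i, le_refl i, by rw [this, hp]⟩
    · refine ⟨{p} + A, {p} + B, k, ?_, ?_, ?_⟩
      · rw [hsplit, hrep2]
        abel
      · rw [Multiset.sum_add, Multiset.sum_singleton]; omega
      · rw [Multiset.sum_add, Multiset.sum_singleton]; omega
  · -- count ≥ 2
    rw [Multiset.count_add, Multiset.count_replicate, if_pos rfl]
    omega
  · intro M1 M2 h
    have := congrArg Subtype.val h
    simp only at this
    exact Subtype.ext (by
      have := add_right_cancel this
      exact this)
  · rintro ⟨M, ⟨⟨hpw, A, B, k, hsplit, hA, hB⟩, hc⟩⟩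
    -- M has ≥ 2 copies of p
    have hV0 : Multiset.count p (Multiset.replicate k 2) = 0 := by
      rw [Multiset.count_replicate]
      split <;> omega
    have hcount : Multiset.count p A + Multiset.count p B = Multiset.count p M := by
      rw [hsplit, Multiset.count_add, Multiset.count_add, hV0]
      omega
    -- helper for the asymmetric case
    have key : ∀ A' B' : Multiset ℕ, M = A' + B' + Multiset.replicate k 2 →
        A'.sum + k = n → B'.sum + k = n → 2 ≤ Multiset.count p A' →
        (∀ q ∈ B', ∃ t ≤ i, q = m ^ t) →
        ∃ M' : Multiset ℕ, (Til (n - p) M') ∧ M = M' + Multiset.replicate 2 p := by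
      intro A' B' hsplit' hA' hB' hcA hBpow
      have hrl : Multiset.replicate 2 p ≤ A' := by
        rw [← Multiset.le_count_iff_replicate_le]
        exact hcA
      obtain ⟨A'', hA''⟩ := Multiset.le_iff_exists_add.1 hrl
      have hA''sum : A'.sum = 2 * p + A''.sum := by
        rw [hA'']
        simp [Multiset.sum_replicate]
        ring
      have hBsum : p ≤ B'.sum := by omega
      obtain ⟨E, hEle, hEsum⟩ := greedy m hm B' p
        (fun q hq => by obtain ⟨t, _, rfl⟩ := hBpow q hq; exact ⟨t, rfl⟩)
        (fun q hq => by
          obtain ⟨t, htle, rfl⟩ := hBpow q hq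
          exact pow_dvd_pow m htle) hBsum
      obtain ⟨B'', hB''⟩ := Multiset.le_iff_exists_add.1 hEle
      refine ⟨A'' + E + B'' + Multiset.replicate k 2, ?_, ?_⟩
      · refine ⟨A'' + E, B'', k, by abel, ?_, ?_⟩
        · rw [Multiset.sum_add]
          omega
        · have : B'.sum = E.sum + B''.sum := by rw [hB'', Multiset.sum_add]
          omega
      · rw [hsplit', hA'', hB'']
        abel
    have hfin : ∃ M' : Multiset ℕ, (Til (n - p) M') ∧ M = M' + Multiset.replicate 2 p := by
      have hApow : ∀ q ∈ A, ∃ t ≤ i, q = m ^ t := fun q hq =>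
        hpw q (by rw [hsplit]; simp [hq])
      have hBpow : ∀ q ∈ B, ∃ t ≤ i, q = m ^ t := fun q hq =>
        hpw q (by rw [hsplit]; simp [hq])
      rcases Nat.lt_or_ge (Multiset.count p A) 2 with hA2 | hA2
      · rcases Nat.lt_or_ge (Multiset.count p B) 2 with hB2 | hB2
        · -- both counts ≤ 1, so both = 1
          have hcA1 : Multiset.count p A = 1 := by omega
          have hcB1 : Multiset.count p B = 1 := by omega
          have hpA : p ∈ A := by rw [← Multiset.count_pos, hcA1]; omega
          have hpB : p ∈ B := by rw [← Multiset.count_pos, hcB1]; omega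
          obtain ⟨A₁, rfl⟩ : ∃ A₁, A = p ::ₘ A₁ := ⟨A.erase p, (Multiset.cons_erase hpA).symm⟩
          obtain ⟨B₁, rfl⟩ : ∃ B₁, B = p ::ₘ B₁ := ⟨B.erase p, (Multiset.cons_erase hpB).symm⟩
          refine ⟨A₁ + B₁ + Multiset.replicate k 2, ?_, ?_⟩
          · refine ⟨A₁, B₁, k, rfl, ?_, ?_⟩
            · rw [Multiset.sum_cons] at hA; omega
            · rw [Multiset.sum_cons] at hB; omega
          · rw [hsplit, hrep2, ← Multiset.singleton_add, ← Multiset.singleton_add]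
            abel
        · -- count in B ≥ 2 : symmetric
          exact key B A (by rw [hsplit]; abel) hB hA hB2 hApow
      · exact key A B hsplit hA hB hA2 hBpow
    obtain ⟨M', htil', hMeq⟩ := hfin
    refine ⟨⟨M', ⟨?_, htil'⟩⟩, ?_⟩
    · intro x hx
      exact hpw x (by rw [hMeq]; simp [hx])
    · exact Subtype.ext hMeq.symm


/-! ### Qof : scaled m-ary partitions -/

def Qof (m u : ℕ) (P : Multiset ℕ) : Multiset ℕ :=
  P.map (fun x => m ^ u * x) + Multiset.replicate m (m ^ u)

lemma map_mul_sum (c : ℕ) (S : Multiset ℕ) : (S.map (fun x => c * x)).sum = c * S.sum := by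
  induction S using Multiset.induction with
  | empty => simp
  | cons a S ih => simp [ih, Nat.mul_add]

lemma qof_sum {m u i : ℕ} (hm : 2 ≤ m) (hui : u < i) {P : Multiset ℕ}
    (hP : P ∈ MaryP m (m ^ (i - u) - m)) : (Qof m u P).sum = m ^ i := by
  have h1 : m ^ u * m ^ (i - u) = m ^ i := by rw [← pow_add]; congr 1; omega
  have h2 : m ≤ m ^ (i - u) := Nat.le_self_pow (by omega) m
  rw [Qof, Multiset.sum_add, map_mul_sum, hP.2, Multiset.sum_replicate, smul_eq_mul,
    mul_comm m (m ^ u), ← Nat.mul_add, Nat.sub_add_cancel h2, h1]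

lemma qof_parts {m u i : ℕ} (hm : 2 ≤ m) (hui : u < i) {P : Multiset ℕ}
    (hP : P ∈ MaryP m (m ^ (i - u) - m)) :
    ∀ x ∈ Qof m u P, ∃ t, u ≤ t ∧ t ≤ i - 1 ∧ x = m ^ t := by
  intro x hx
  rw [Qof, Multiset.mem_add] at hx
  rcases hx with hx | hx
  · rw [Multiset.mem_map] at hx
    obtain ⟨pp, hpp, rfl⟩ := hx
    obtain ⟨t', rfl⟩ := hP.1 pp hpp
    have hle : m ^ t' ≤ m ^ (i - u) - m :=
      hP.2 ▸ Multiset.single_le_sum (fun x _ => Nat.zero_le x) _ hpp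
    have hmm : m ≤ m ^ (i - u) := Nat.le_self_pow (by omega) m
    have hlt : m ^ t' < m ^ (i - u) := by omega
    have ht' : t' < i - u := by
      by_contra hcon
      have := Nat.pow_le_pow_right (show 1 ≤ m by omega) (show i - u ≤ t' by omega)
      omega
    exact ⟨u + t', by omega, by omega, by rw [pow_add]⟩
  · have := Multiset.eq_of_mem_replicate hx
    exact ⟨u, le_rfl, by omega, this⟩

lemma qof_mem {m u : ℕ} (hm : 2 ≤ m) (P : Multiset ℕ) : m ^ u ∈ Qof m u P := by
  rw [Qof, Multiset.mem_add]
  right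
  rw [Multiset.mem_replicate]
  exact ⟨by omega, rfl⟩

lemma qof_inj {m u : ℕ} (hm : 2 ≤ m) {P₁ P₂ : Multiset ℕ}
    (h : Qof m u P₁ = Qof m u P₂) : P₁ = P₂ := by
  rw [Qof, Qof] at h
  have h2 := add_right_cancel h
  refine Multiset.map_injective ?_ h2
  intro x y hxy
  exact Nat.eq_of_mul_eq_mul_left (pow_pos (by omega) u) hxy

lemma div_map (d : ℕ) (hd : 0 < d) :
    ∀ (S : Multiset ℕ), (∀ x ∈ S, d ∣ x) → ∃ P : Multiset ℕ, S = P.map (fun x => d * x) := by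
  intro S
  induction S using Multiset.induction with
  | empty => exact fun _ => ⟨0, by simp⟩
  | cons a S ih =>
    intro h
    obtain ⟨P, hP⟩ := ih (fun x hx => h x (by simp [hx]))
    obtain ⟨a', rfl⟩ := h a (by simp)
    exact ⟨a' ::ₘ P, by rw [Multiset.map_cons, ← hP]⟩

lemma qof_surj {m u i : ℕ} (hm : 2 ≤ m) (hui : u < i) {Q : Multiset ℕ}
    (hQlo : ∀ x ∈ Q, ∃ t, u ≤ t ∧ t ≤ i ∧ x = m ^ t) (hmem : m ^ u ∈ Q)
    (hsum : Q.sum = m ^ i) :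
    ∃ P ∈ MaryP m (m ^ (i - u) - m), Q = Qof m u P := by
  set c := m ^ u with hc
  have hcpos : 0 < c := pow_pos (by omega) u
  set r := Multiset.count c Q with hr
  set Rest := Q.filter (fun x => ¬ x = c) with hRest
  have hsplitQ : Q.filter (fun x => x = c) + Rest = Q := Multiset.filter_add_not _ Q
  have hfe : Q.filter (fun x => x = c) = Multiset.replicate r c := by
    rw [hr, ← Multiset.filter_eq']
  have hdvd_rest : m ^ (u + 1) ∣ Rest.sum := by
    refine Multiset.dvd_sum ?_
    intro x hx
    rw [hRest, Multiset.mem_filter] at hx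
    obtain ⟨t, ht1, ht2, rfl⟩ := hQlo x hx.1
    have : t ≠ u := by
      intro hcon
      exact hx.2 (by rw [hcon, hc])
    exact pow_dvd_pow m (by omega)
  have hQsum : r * c + Rest.sum = m ^ i := by
    rw [← hsum, ← hsplitQ, Multiset.sum_add, hfe, Multiset.sum_replicate, smul_eq_mul]
  have hdvd_p : m ^ (u + 1) ∣ m ^ i := pow_dvd_pow m (by omega)
  have hdvd_rc : m ^ (u + 1) ∣ r * c := by
    have h1 : r * c = m ^ i - Rest.sum := by omega
    rw [h1]
    exact Nat.dvd_sub hdvd_p hdvd_rest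
  have hmr : m ∣ r := by
    have h1 : m ^ (u + 1) = c * m := by rw [hc, pow_succ]
    rw [h1, mul_comm r c] at hdvd_rc
    exact (mul_dvd_mul_iff_left (show c ≠ 0 by omega)).1 hdvd_rc
  have hr1 : 1 ≤ r := by
    rw [hr]
    exact Multiset.count_pos.2 hmem
  have hrm : m ≤ r := Nat.le_of_dvd (by omega) hmr
  set Q' := Rest + Multiset.replicate (r - m) c with hQ'
  have hQ'dvd : ∀ x ∈ Q', c ∣ x := by
    intro x hx
    rw [hQ', Multiset.mem_add] at hx
    rcases hx with hx | hx
    · rw [hRest, Multiset.mem_filter] at hx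
      obtain ⟨t, ht1, ht2, rfl⟩ := hQlo x hx.1
      exact pow_dvd_pow m ht1
    · rw [Multiset.eq_of_mem_replicate hx]
  obtain ⟨P, hPmap⟩ := div_map c hcpos Q' hQ'dvd
  have hQeq : Q = Qof m u P := by
    rw [Qof, ← hPmap, hQ', ← hc]
    rw [← hsplitQ, hfe]
    have : Multiset.replicate r c = Multiset.replicate (r - m) c + Multiset.replicate m c := by
      rw [← Multiset.replicate_add]
      congr 1
      omega
    rw [this]
    abel
  have hPsum : c * P.sum + m * c = m ^ i := by
    have h1 : Q'.sum = c * P.sum := by rw [hPmap, map_mul_sum]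
    have h2 : Q'.sum = Rest.sum + (r - m) * c := by
      rw [hQ', Multiset.sum_add, Multiset.sum_replicate, smul_eq_mul]
    have h3 : (r - m) * c + m * c = r * c := by
      rw [← Nat.add_mul]
      congr 1
      omega
    omega
  have hPsum' : P.sum = m ^ (i - u) - m := by
    have h1 : c * m ^ (i - u) = m ^ i := by rw [hc, ← pow_add]; congr 1; omega
    have h2 : m ≤ m ^ (i - u) := Nat.le_self_pow (by omega) m
    have h4 : c * (P.sum + m) = c * m ^ (i - u) := by
      rw [Nat.mul_add, mul_comm c m]
      omega
    have h5 : P.sum + m = m ^ (i - u) := Nat.eq_of_mul_eq_mul_left hcpos h4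
    omega
  refine ⟨P, ⟨?_, hPsum'⟩, hQeq⟩
  intro x hx
  have hcx : c * x ∈ Q' := by
    rw [hPmap]
    exact Multiset.mem_map_of_mem _ hx
  have hcx2 : c * x ∈ Q := by
    rw [hQeq, Qof, ← hc, Multiset.mem_add]
    left
    exact Multiset.mem_map_of_mem _ hx
  obtain ⟨t, ht1, ht2, hpow⟩ := hQlo _ hcx2
  refine ⟨t - u, ?_⟩
  have h1 : c * m ^ (t - u) = m ^ t := by rw [hc, ← pow_add]; congr 1; omega
  have := hpow
  rw [← h1] at this
  exact Nat.eq_of_mul_eq_mul_left hcpos this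

lemma decomp_unique {s c₁ c₂ : ℕ} {N₁ N₂ Q₁ Q₂ : Multiset ℕ}
    (hc₁ : 0 < c₁) (hc₂ : 0 < c₂)
    (hN₂ : ∀ x ∈ N₂, x ≤ c₂)
    (hQ₁lo : ∀ x ∈ Q₁, c₁ ≤ x) (hQ₂lo : ∀ x ∈ Q₂, c₂ ≤ x)
    (hm₁ : c₁ ∈ Q₁) (hm₂ : c₂ ∈ Q₂)
    (hs₁ : Q₁.sum = s) (hs₂ : Q₂.sum = s)
    (hN₁f : (N₁.filter (fun x => c₁ < x)) = 0) (hN₂f : (N₂.filter (fun x => c₂ < x)) = 0)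
    (heq : N₁ + Q₁ = N₂ + Q₂) (hcle : c₁ ≤ c₂) : c₁ = c₂ ∧ Q₁ = Q₂ := by
  -- structure of Q₁, Q₂
  set r₁ := Multiset.card (Q₁.filter (fun x => ¬ c₁ < x)) with hr₁
  set r₂ := Multiset.card (Q₂.filter (fun x => ¬ c₂ < x)) with hr₂
  have hrep₁ : Q₁.filter (fun x => ¬ c₁ < x) = Multiset.replicate r₁ c₁ := by
    rw [Multiset.eq_replicate]
    refine ⟨rfl, ?_⟩
    intro x hx
    rw [Multiset.mem_filter] at hx
    have := hQ₁lo x hx.1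
    omega
  have hrep₂ : Q₂.filter (fun x => ¬ c₂ < x) = Multiset.replicate r₂ c₂ := by
    rw [Multiset.eq_replicate]
    refine ⟨rfl, ?_⟩
    intro x hx
    rw [Multiset.mem_filter] at hx
    have := hQ₂lo x hx.1
    omega
  have hQ₁st : Q₁ = Q₁.filter (fun x => c₁ < x) + Multiset.replicate r₁ c₁ := by
    rw [← hrep₁, Multiset.filter_add_not]
  have hQ₂st : Q₂ = Q₂.filter (fun x => c₂ < x) + Multiset.replicate r₂ c₂ := by
    rw [← hrep₂, Multiset.filter_add_not]
  have hr₁pos : 1 ≤ r₁ := by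
    rw [hr₁]
    refine Multiset.card_pos.2 (fun hcon => ?_)
    have : c₁ ∈ Multiset.filter (fun x => ¬ c₁ < x) Q₁ := by
      rw [Multiset.mem_filter]
      exact ⟨hm₁, by omega⟩
    rw [hcon] at this
    simp at this
  have hr₂pos : 1 ≤ r₂ := by
    rw [hr₂]
    refine Multiset.card_pos.2 (fun hcon => ?_)
    have : c₂ ∈ Multiset.filter (fun x => ¬ c₂ < x) Q₂ := by
      rw [Multiset.mem_filter]
      exact ⟨hm₂, by omega⟩
    rw [hcon] at this
    simp at this
  have hF₁ : (N₁ + Q₁).filter (fun x => c₁ < x) = Q₁.filter (fun x => c₁ < x) := by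
    rw [Multiset.filter_add, hN₁f, zero_add]
  have hF₂ : (N₁ + Q₁).filter (fun x => c₂ < x) = Q₂.filter (fun x => c₂ < x) := by
    rw [heq, Multiset.filter_add, hN₂f, zero_add]
  have hsum₁ : ((N₁ + Q₁).filter (fun x => c₁ < x)).sum + r₁ * c₁ = s := by
    rw [hF₁, ← hs₁]
    conv_rhs => rw [hQ₁st]
    rw [Multiset.sum_add, Multiset.sum_replicate, smul_eq_mul]
  have hsum₂ : ((N₁ + Q₁).filter (fun x => c₂ < x)).sum + r₂ * c₂ = s := by
    rw [hF₂, ← hs₂]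
    conv_rhs => rw [hQ₂st]
    rw [Multiset.sum_add, Multiset.sum_replicate, smul_eq_mul]
  rcases Nat.eq_or_lt_of_le hcle with hceq | hclt
  · -- equal case
    subst hceq
    have hrr : r₁ = r₂ := by
      have h1 : r₁ * c₁ = r₂ * c₁ := by omega
      exact Nat.eq_of_mul_eq_mul_right hc₁ h1
    constructor
    · rfl
    · rw [hQ₁st, hQ₂st, ← hF₁, ← hF₂, hrr]
  · -- c₁ < c₂ : contradiction
    exfalso
    set F₁ := (N₁ + Q₁).filter (fun x => c₁ < x) with hF₁d
    set H := F₁.filter (fun x => c₂ < x) with hH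
    set G := F₁.filter (fun x => ¬ c₂ < x) with hG
    have hFHG : F₁ = H + G := by rw [hH, hG, Multiset.filter_add_not]
    have hHF₂ : H = (N₁ + Q₁).filter (fun x => c₂ < x) := by
      rw [hH, hF₁d, Multiset.filter_filter]
      refine Multiset.filter_congr ?_
      intro x _
      constructor
      · rintro ⟨h1, h2⟩; exact h1
      · intro h; exact ⟨h, by omega⟩
    -- count of c₂ in G
    have hc₂M₀ : r₂ ≤ Multiset.count c₂ (N₁ + Q₁) := by
      have h1 : Multiset.replicate r₂ c₂ ≤ Q₂ := by
        conv_rhs => rw [hQ₂st]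
        exact Multiset.le_add_left _ _
      have h2 : Q₂ ≤ N₁ + Q₁ := by
        rw [heq]
        exact Multiset.le_add_left _ _
      rw [Multiset.le_count_iff_replicate_le]
      exact le_trans h1 h2
    have hcntG : Multiset.count c₂ G = Multiset.count c₂ (N₁ + Q₁) := by
      have e1 : Multiset.count c₂ G = Multiset.count c₂ F₁ := by
        rw [hG, Multiset.count_filter_of_pos (by omega)]
      have e2 : Multiset.count c₂ F₁ = Multiset.count c₂ (N₁ + Q₁) := by
        rw [hF₁d, Multiset.count_filter_of_pos (by omega)]
      exact e1.trans e2
    have hGsum : Multiset.count c₂ (N₁ + Q₁) * c₂ ≤ G.sum := by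
      have h1 : Multiset.replicate (Multiset.count c₂ G) c₂ ≤ G :=
        (Multiset.le_count_iff_replicate_le).1 le_rfl
      have h2 := sum_le_of_le h1
      rw [Multiset.sum_replicate, smul_eq_mul, hcntG] at h2
      exact h2
    have hmul : r₂ * c₂ ≤ Multiset.count c₂ (N₁ + Q₁) * c₂ := Nat.mul_le_mul_right c₂ hc₂M₀
    have hx1 : 1 ≤ r₁ * c₁ := by
      have := Nat.mul_le_mul hr₁pos hc₁
      omega
    have hFsum : F₁.sum = H.sum + G.sum := by rw [hFHG, Multiset.sum_add]
    rw [← hHF₂] at hsum₂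
    omega


lemma class1_equiv {m i n : ℕ} (hm : 2 ≤ m) (hi : 2 ≤ i) (hpn : m ^ i ≤ n) :
    Nonempty ((Σ u : Fin i, ↥(GS m u.1 (n - m ^ i)) × ↥(MaryP m (m ^ (i - u.1) - m))) ≃
      ↥{M ∈ GS m i n | M.count (m ^ i) = 1}) := by
  classical
  set p := m ^ i with hp
  have hp4 : 4 ≤ p := by
    rw [hp]
    calc 4 = 2 ^ 2 := rfl
    _ ≤ m ^ 2 := Nat.pow_le_pow_left hm 2
    _ ≤ m ^ i := Nat.pow_le_pow_right (by omega) hi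
  have hpow_lt : ∀ t, t < i → m ^ t < p := fun t ht => Nat.pow_lt_pow_right (by omega) ht
  have key_mem : ∀ (u : Fin i) (N P : Multiset ℕ), N ∈ GS m u.1 (n - p) →
      P ∈ MaryP m (m ^ (i - u.1) - m) →
      (p ::ₘ (N + Qof m u.1 P)) ∈ GS m i n ∧ (p ::ₘ (N + Qof m u.1 P)).count p = 1 := by
    intro u N P hN hP
    have hu : u.1 < i := u.2
    have hNlt : ∀ x ∈ N, x < p := by
      intro x hx
      obtain ⟨t, ht, rfl⟩ := hN.1 x hx
      exact hpow_lt t (by omega)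
    have hQlt : ∀ x ∈ Qof m u.1 P, x < p := by
      intro x hx
      obtain ⟨t, ht1, ht2, rfl⟩ := qof_parts hm hu hP x hx
      exact hpow_lt t (by omega)
    constructor
    · constructor
      · intro x hx
        rw [Multiset.mem_cons] at hx
        rcases hx with rfl | hx
        · exact ⟨i, le_rfl, hp⟩
        · rw [Multiset.mem_add] at hx
          rcases hx with hx | hx
          · obtain ⟨t, ht, rfl⟩ := hN.1 x hx
            exact ⟨t, by omega, rfl⟩
          · obtain ⟨t, ht1, ht2, rfl⟩ := qof_parts hm hu hP x hx
            exact ⟨t, by omega, rfl⟩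
      · obtain ⟨A, B, k, hsplit, hA, hB⟩ := hN.2
        refine ⟨{p} + A, B + Qof m u.1 P, k, ?_, ?_, ?_⟩
        · rw [← Multiset.singleton_add, hsplit]
          abel
        · rw [Multiset.sum_add, Multiset.sum_singleton]
          omega
        · rw [Multiset.sum_add, qof_sum hm hu hP]
          omega
    · rw [Multiset.count_cons_self]
      have hz : Multiset.count p (N + Qof m u.1 P) = 0 := by
        rw [Multiset.count_eq_zero]
        intro hmem
        rw [Multiset.mem_add] at hmem
        rcases hmem with h | h
        · have := hNlt p h
          omega
        · have := hQlt p h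
          omega
      omega
  refine ⟨Equiv.ofBijective (fun x =>
    ⟨p ::ₘ (x.2.1.1 + Qof m x.1.1 x.2.2.1),
      (key_mem x.1 x.2.1.1 x.2.2.1 x.2.1.2 x.2.2.2).1,
      (key_mem x.1 x.2.1.1 x.2.2.1 x.2.1.2 x.2.2.2).2⟩) ⟨?_, ?_⟩⟩
  · -- injectivity
    rintro ⟨u₁, N₁, P₁⟩ ⟨u₂, N₂, P₂⟩ hx
    have heq : p ::ₘ (N₁.1 + Qof m u₁.1 P₁.1) = p ::ₘ (N₂.1 + Qof m u₂.1 P₂.1) :=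
      congrArg Subtype.val hx
    rw [Multiset.cons_inj_right] at heq
    have hc₁ : (0:ℕ) < m ^ u₁.1 := pow_pos (by omega) _
    have hc₂ : (0:ℕ) < m ^ u₂.1 := pow_pos (by omega) _
    have hNf : ∀ (u : Fin i) (N : Multiset ℕ), N ∈ GS m u.1 (n - p) →
        N.filter (fun x => m ^ u.1 < x) = 0 := by
      intro u N hN
      rw [Multiset.filter_eq_nil]
      intro x hx
      obtain ⟨t, ht, rfl⟩ := hN.1 x hx
      have := Nat.pow_le_pow_right (show 1 ≤ m by omega) ht
      omega
    have hQlo : ∀ (u : Fin i) (P : Multiset ℕ), P ∈ MaryP m (m ^ (i - u.1) - m) →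
        ∀ x ∈ Qof m u.1 P, m ^ u.1 ≤ x := by
      intro u P hP x hx
      obtain ⟨t, ht1, ht2, rfl⟩ := qof_parts hm u.2 hP x hx
      exact Nat.pow_le_pow_right (by omega) ht1
    have hN₂le : ∀ x ∈ N₂.1, x ≤ m ^ u₂.1 := by
      intro x hx
      obtain ⟨t, ht, rfl⟩ := N₂.2.1 x hx
      exact Nat.pow_le_pow_right (by omega) ht
    have hN₁le : ∀ x ∈ N₁.1, x ≤ m ^ u₁.1 := by
      intro x hx
      obtain ⟨t, ht, rfl⟩ := N₁.2.1 x hx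
      exact Nat.pow_le_pow_right (by omega) ht
    have hceq : m ^ u₁.1 = m ^ u₂.1 ∧ Qof m u₁.1 P₁.1 = Qof m u₂.1 P₂.1 := by
      rcases le_total (m ^ u₁.1) (m ^ u₂.1) with hle | hle
      · exact decomp_unique hc₁ hc₂ hN₂le (hQlo u₁ P₁.1 P₁.2) (hQlo u₂ P₂.1 P₂.2)
          (qof_mem hm _) (qof_mem hm _) (qof_sum hm u₁.2 P₁.2) (qof_sum hm u₂.2 P₂.2)
          (hNf u₁ N₁.1 N₁.2) (hNf u₂ N₂.1 N₂.2) heq hle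
      · have := decomp_unique hc₂ hc₁ hN₁le (hQlo u₂ P₂.1 P₂.2) (hQlo u₁ P₁.1 P₁.2)
          (qof_mem hm _) (qof_mem hm _) (qof_sum hm u₂.2 P₂.2) (qof_sum hm u₁.2 P₁.2)
          (hNf u₂ N₂.1 N₂.2) (hNf u₁ N₁.1 N₁.2) heq.symm hle
        exact ⟨this.1.symm, this.2.symm⟩
    have huu : u₁ = u₂ := Fin.ext (Nat.pow_right_injective hm hceq.1)
    subst huu
    have hPP : P₁ = P₂ := Subtype.ext (qof_inj hm hceq.2)
    have hNN : N₁ = N₂ := by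
      rw [hceq.2] at heq
      exact Subtype.ext (add_right_cancel heq)
    rw [hPP, hNN]
  · -- surjectivity
    rintro ⟨M, hMgs, hMc⟩
    have hpM : p ∈ M := by
      rw [← Multiset.count_pos, hMc]
      omega
    set M₀ := M.erase p with hM₀d
    have hMM₀ : M = p ::ₘ M₀ := (Multiset.cons_erase hpM).symm
    have hcM₀ : Multiset.count p M₀ = 0 := by
      rw [hM₀d, Multiset.count_erase_self, hMc]
    have hM₀pw : ∀ x ∈ M₀, ∃ t ≤ i, x = m ^ t := by
      intro x hx
      exact hMgs.1 x (Multiset.mem_of_mem_erase hx)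
    have hM₀ne : ∀ x ∈ M₀, x ≠ p := by
      intro x hx hxp
      rw [Multiset.count_eq_zero] at hcM₀
      rw [hxp] at hx
      exact hcM₀ hx
    have initkey : ∀ A' B' k', M = A' + B' + Multiset.replicate k' 2 →
        A'.sum + k' = n → B'.sum + k' = n → p ∈ A' →
        ∃ N Q : Multiset ℕ, M₀ = N + Q ∧ Til (n - p) N ∧ Q.sum = p := by
      intro A' B' k' hsplit hA' hB' hpA
      obtain ⟨A₁, hA₁⟩ : ∃ A₁, A' = p ::ₘ A₁ := ⟨A'.erase p, (Multiset.cons_erase hpA).symm⟩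
      have hApsum : p ≤ A'.sum := Multiset.single_le_sum (fun y _ => Nat.zero_le y) _ hpA
      have hB'pow : ∀ q ∈ B', ∃ t, q = m ^ t := by
        intro q hq
        obtain ⟨t, _, rfl⟩ := hMgs.1 q (by rw [hsplit]; simp [hq])
        exact ⟨t, rfl⟩
      have hB'dvd : ∀ q ∈ B', q ∣ p := by
        intro q hq
        obtain ⟨t, ht, rfl⟩ := hMgs.1 q (by rw [hsplit]; simp [hq])
        rw [hp]
        exact pow_dvd_pow m ht
      have hBsum : p ≤ B'.sum := by omega
      obtain ⟨E, hEle, hEsum⟩ := greedy m hm B' p hB'pow hB'dvd hBsum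
      obtain ⟨B₁, hB₁⟩ := Multiset.le_iff_exists_add.1 hEle
      refine ⟨A₁ + B₁ + Multiset.replicate k' 2, E, ?_, ?_, hEsum⟩
      · have h1 : M = p ::ₘ (A₁ + B₁ + Multiset.replicate k' 2 + E) := by
          rw [hsplit, hA₁, hB₁, ← Multiset.singleton_add, ← Multiset.singleton_add]
          abel
        rw [hMM₀] at h1
        rwa [Multiset.cons_inj_right] at h1
      · refine ⟨A₁, B₁, k', rfl, ?_, ?_⟩
        · have h2 : A'.sum = p + A₁.sum := by rw [hA₁, Multiset.sum_cons]
          omega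
        · have h2 : B'.sum = E.sum + B₁.sum := by rw [hB₁, Multiset.sum_add]
          omega
    have hinit : ∃ Q : Multiset ℕ, Q ≤ M₀ ∧ Q.sum = p ∧ Til (n - p) (M₀ - Q) := by
      obtain ⟨A, B, k, hsplit, hA, hB⟩ := hMgs.2
      have hpAB : p ∈ A ∨ p ∈ B := by
        have h1 : p ∈ A + B + Multiset.replicate k 2 := hsplit ▸ hpM
        rw [Multiset.mem_add, Multiset.mem_add] at h1
        rcases h1 with (h | h) | h
        · exact Or.inl h
        · exact Or.inr h
        · have := Multiset.eq_of_mem_replicate h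
          omega
      have hres : ∃ N Q : Multiset ℕ, M₀ = N + Q ∧ Til (n - p) N ∧ Q.sum = p := by
        rcases hpAB with h | h
        · exact initkey A B k hsplit hA hB h
        · exact initkey B A k (by rw [hsplit]; abel) hB hA h
      obtain ⟨N, Q, hNQ, hTil, hQsum⟩ := hres
      refine ⟨Q, by rw [hNQ]; exact Multiset.le_add_left _ _, hQsum, ?_⟩
      have h2 : M₀ - Q = N := by rw [hNQ, add_tsub_cancel_right]
      rw [h2]
      exact hTil
    set F := (M₀.powerset.toFinset).filter
      (fun Q => Q.sum = p ∧ Til (n - p) (M₀ - Q)) with hF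
    have hFne : F.Nonempty := by
      obtain ⟨Q, h1, h2, h3⟩ := hinit
      refine ⟨Q, ?_⟩
      rw [hF, Finset.mem_filter, Multiset.mem_toFinset, Multiset.mem_powerset]
      exact ⟨h1, h2, h3⟩
    obtain ⟨Q, hQF, hQmax⟩ := F.exists_max_image (fun Q => (Q.map (fun y => y * y)).sum) hFne
    rw [hF, Finset.mem_filter, Multiset.mem_toFinset, Multiset.mem_powerset] at hQF
    obtain ⟨hQle, hQsum, hQtil⟩ := hQF
    set N := M₀ - Q with hNd
    have hM₀NQ : M₀ = N + Q := by
      rw [hNd]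
      exact (tsub_add_cancel_of_le hQle).symm
    have hQne : Q ≠ 0 := by
      intro h
      rw [h] at hQsum
      simp at hQsum
      omega
    have hQfne : Q.toFinset.Nonempty := by
      simpa [Multiset.toFinset_nonempty] using hQne
    set q₀ := Q.toFinset.min' hQfne with hq₀d
    have hq₀Q : q₀ ∈ Q := Multiset.mem_toFinset.1 (Q.toFinset.min'_mem hQfne)
    have hq₀min : ∀ x ∈ Q, q₀ ≤ x := fun x hx => Q.toFinset.min'_le x (Multiset.mem_toFinset.2 hx)
    have hQpw : ∀ x ∈ Q, ∃ t ≤ i, x = m ^ t := fun x hx => hM₀pw x (Multiset.mem_of_le hQle hx)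
    obtain ⟨u, hui', hq₀⟩ := hQpw q₀ hq₀Q
    have hq₀ne : q₀ ≠ p := hM₀ne q₀ (Multiset.mem_of_le hQle hq₀Q)
    have hu : u < i := by
      rcases Nat.eq_or_lt_of_le hui' with h | h
      · exfalso
        apply hq₀ne
        rw [hq₀, h, hp]
      · exact h
    have hNle : ∀ x ∈ N, x ≤ q₀ := by
      by_contra hcon
      push_neg at hcon
      obtain ⟨x, hxN, hxgt⟩ := hcon
      have hxM₀ : x ∈ M₀ := by
        rw [hM₀NQ]
        exact Multiset.mem_add.2 (Or.inl hxN)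
      obtain ⟨t, hti, hxpow⟩ := hM₀pw x hxM₀
      have hxdvdp : x ∣ p := by
        rw [hxpow, hp]
        exact pow_dvd_pow m hti
      have hxpos : 0 < x := by
        rw [hxpow]
        exact pow_pos (by omega) t
      set Sx := Q.filter (fun q => q < x) with hSx
      have hq₀S : q₀ ∈ Sx := by
        rw [hSx, Multiset.mem_filter]
        exact ⟨hq₀Q, hxgt⟩
      have hSpow : ∀ q ∈ Sx, ∃ s, q = m ^ s := by
        intro q hq
        rw [hSx, Multiset.mem_filter] at hq
        obtain ⟨s, _, rfl⟩ := hQpw q hq.1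
        exact ⟨s, rfl⟩
      have hSdvd : ∀ q ∈ Sx, q ∣ x := by
        intro q hq
        rw [hSx, Multiset.mem_filter] at hq
        obtain ⟨s, _, rfl⟩ := hQpw q hq.1
        have hsx : m ^ s < x := hq.2
        have hst : s ≤ t := by
          by_contra hc2
          have := Nat.pow_lt_pow_right (show 1 < m by omega) (show t < s by omega)
          omega
        rw [hxpow]
        exact pow_dvd_pow m hst
      have hrest_dvd : x ∣ (Q.filter (fun q => ¬ q < x)).sum := by
        refine Multiset.dvd_sum ?_
        intro q hq
        rw [Multiset.mem_filter] at hq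
        obtain ⟨s, _, rfl⟩ := hQpw q hq.1
        have hsx : x ≤ m ^ s := by omega
        have hts : t ≤ s := by
          by_contra hc2
          have := Nat.pow_lt_pow_right (show 1 < m by omega) (show s < t by omega)
          omega
        rw [hxpow]
        exact pow_dvd_pow m hts
      have hsplitS : Sx.sum + (Q.filter (fun q => ¬ q < x)).sum = p := by
        rw [hSx, ← Multiset.sum_add, Multiset.filter_add_not, hQsum]
      have hSsum_dvd : x ∣ Sx.sum := by
        have h1 : Sx.sum = p - (Q.filter (fun q => ¬ q < x)).sum := by omega
        rw [h1]
        exact Nat.dvd_sub hxdvdp hrest_dvd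
      have hSpos : 0 < Sx.sum := by
        have h1 := Multiset.single_le_sum (fun y _ => Nat.zero_le y) _ hq₀S
        have h2 : 0 < q₀ := by
          rw [hq₀]
          exact pow_pos (by omega) u
        omega
      have hxle : x ≤ Sx.sum := Nat.le_of_dvd hSpos hSsum_dvd
      obtain ⟨E, hEle, hEsum⟩ := greedy m hm Sx x hSpow hSdvd hxle
      have hEQ : E ≤ Q := le_trans hEle (Multiset.filter_le _ _)
      obtain ⟨Q₁, hQ₁⟩ := Multiset.le_iff_exists_add.1 hEQ
      obtain ⟨N₁, hN₁⟩ : ∃ N₁, N = x ::ₘ N₁ := ⟨N.erase x, (Multiset.cons_erase hxN).symm⟩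
      set Q' := x ::ₘ Q₁ with hQ'd
      have hM₀' : M₀ = (N₁ + E) + Q' := by
        rw [hM₀NQ, hN₁, hQ₁, hQ'd, ← Multiset.singleton_add, ← Multiset.singleton_add]
        abel
      have hQ'sum : Q'.sum = p := by
        have h1 : Q.sum = E.sum + Q₁.sum := by rw [hQ₁, Multiset.sum_add]
        rw [hQ'd, Multiset.sum_cons]
        omega
      have hQ'til : Til (n - p) (M₀ - Q') := by
        have hsub : M₀ - Q' = N₁ + E := by rw [hM₀', add_tsub_cancel_right]
        rw [hsub]
        obtain ⟨A, B, k, hNsplit, hA, hB⟩ := hQtil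
        have hxN' : x ∈ A + B + Multiset.replicate k 2 := hNsplit ▸ hxN
        rw [Multiset.mem_add, Multiset.mem_add] at hxN'
        rcases hxN' with (hxA | hxB) | hxV
        · obtain ⟨A₁, hA₁⟩ : ∃ A₁, A = x ::ₘ A₁ := ⟨A.erase x, (Multiset.cons_erase hxA).symm⟩
          have hN₁eq : N₁ = A₁ + B + Multiset.replicate k 2 := by
            have h1 : x ::ₘ N₁ = x ::ₘ (A₁ + B + Multiset.replicate k 2) := by
              rw [← hN₁, hNsplit, hA₁, ← Multiset.singleton_add, ← Multiset.singleton_add]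
              abel
            rwa [Multiset.cons_inj_right] at h1
          refine ⟨A₁ + E, B, k, by rw [hN₁eq]; abel, ?_, hB⟩
          have h1 : A.sum = x + A₁.sum := by rw [hA₁, Multiset.sum_cons]
          rw [Multiset.sum_add]
          omega
        · obtain ⟨B₁, hB₁⟩ : ∃ B₁, B = x ::ₘ B₁ := ⟨B.erase x, (Multiset.cons_erase hxB).symm⟩
          have hN₁eq : N₁ = A + B₁ + Multiset.replicate k 2 := by
            have h1 : x ::ₘ N₁ = x ::ₘ (A + B₁ + Multiset.replicate k 2) := by
              rw [← hN₁, hNsplit, hB₁, ← Multiset.singleton_add, ← Multiset.singleton_add]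
              abel
            rwa [Multiset.cons_inj_right] at h1
          refine ⟨A, B₁ + E, k, by rw [hN₁eq]; abel, hA, ?_⟩
          have h1 : B.sum = x + B₁.sum := by rw [hB₁, Multiset.sum_cons]
          rw [Multiset.sum_add]
          omega
        · have hx2 : x = 2 := Multiset.eq_of_mem_replicate hxV
          have hk1 : 1 ≤ k := by
            by_contra hc2
            have hk0 : k = 0 := by omega
            rw [hk0] at hxV
            simp at hxV
          have hE1 : ∀ e ∈ E, e = 1 := by
            intro e he
            have heS : e ∈ Sx := Multiset.mem_of_le hEle he
            rw [hSx, Multiset.mem_filter] at heS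
            obtain ⟨s, _, rfl⟩ := hQpw e heS.1
            have h1 : m ^ s < x := heS.2
            rw [hx2] at h1
            have hs0 : s = 0 := by
              by_contra hc2
              have : m ≤ m ^ s := Nat.le_self_pow (by omega) m
              omega
            rw [hs0, pow_zero]
          have hEcard : Multiset.card E = 2 := by
            have h1 : E = Multiset.replicate (Multiset.card E) 1 := by
              rw [Multiset.eq_replicate]
              exact ⟨rfl, hE1⟩
            have h2 : E.sum = Multiset.card E * 1 := by
              conv_lhs => rw [h1]
              rw [Multiset.sum_replicate, smul_eq_mul]
            omega
          have hErep : E = {1} + {1} := by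
            have h1 : E = Multiset.replicate (Multiset.card E) 1 := by
              rw [Multiset.eq_replicate]
              exact ⟨rfl, hE1⟩
            rw [h1, hEcard, show (2:ℕ) = 1 + 1 from rfl, Multiset.replicate_add,
              Multiset.replicate_one]
          have hN₁eq : N₁ = A + B + Multiset.replicate (k-1) 2 := by
            have h1 : x ::ₘ N₁ = x ::ₘ (A + B + Multiset.replicate (k-1) 2) := by
              rw [← hN₁, hNsplit, hx2]
              have h2 : Multiset.replicate k 2 = (2:ℕ) ::ₘ Multiset.replicate (k-1) 2 := by
                conv_lhs => rw [show k = (k-1)+1 by omega]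
                rw [Multiset.replicate_succ]
              rw [h2, ← Multiset.singleton_add, ← Multiset.singleton_add]
              abel
            rwa [Multiset.cons_inj_right] at h1
          refine ⟨A + {1}, B + {1}, k - 1, ?_, ?_, ?_⟩
          · rw [hN₁eq, hErep]
            abel
          · rw [Multiset.sum_add, Multiset.sum_singleton]
            omega
          · rw [Multiset.sum_add, Multiset.sum_singleton]
            omega
      have hQ'F : Q' ∈ F := by
        rw [hF, Finset.mem_filter, Multiset.mem_toFinset, Multiset.mem_powerset]
        exact ⟨by rw [hM₀']; exact Multiset.le_add_left _ _, hQ'sum, hQ'til⟩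
      have hle := hQmax Q' hQ'F
      have hμQ' : (Q'.map (fun y => y*y)).sum = x*x + (Q₁.map (fun y => y*y)).sum := by
        rw [hQ'd, Multiset.map_cons, Multiset.sum_cons]
      have hμQ : (Q.map (fun y => y*y)).sum
          = (E.map (fun y => y*y)).sum + (Q₁.map (fun y => y*y)).sum := by
        rw [hQ₁, Multiset.map_add, Multiset.sum_add]
      have ht1 : 1 ≤ t := by
        by_contra hc2
        have ht0 : t = 0 := by omega
        rw [ht0, pow_zero] at hxpow
        have h1 : 1 ≤ q₀ := by
          rw [hq₀]
          exact Nat.one_le_pow _ _ (by omega)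
        omega
      have hElt : ∀ e ∈ E, e ≤ m ^ (t-1) := by
        intro e he
        have heS := Multiset.mem_of_le hEle he
        rw [hSx, Multiset.mem_filter] at heS
        obtain ⟨s, _, rfl⟩ := hQpw e heS.1
        have hlt : m ^ s < m ^ t := by
          rw [← hxpow]
          exact heS.2
        have hst : s < t := by
          by_contra hc2
          have := Nat.pow_le_pow_right (show 1 ≤ m by omega) (show t ≤ s by omega)
          omega
        exact Nat.pow_le_pow_right (by omega) (by omega)
      have hμE : (E.map (fun y => y*y)).sum < x * x := by
        have h1 : (E.map (fun y => y*y)).sum ≤ (E.map (fun y => m^(t-1) * y)).sum := by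
          refine Multiset.sum_map_le_sum_map _ _ ?_
          intro e he
          exact Nat.mul_le_mul_right e (hElt e he)
        have h2 : (E.map (fun y => m^(t-1) * y)).sum = m^(t-1) * E.sum := map_mul_sum _ _
        have h3 : m^(t-1) * x < x * x := by
          have h5 : m^(t-1) < x := by
            rw [hxpow]
            exact Nat.pow_lt_pow_right (by omega) (by omega)
          exact (Nat.mul_lt_mul_right hxpos).2 h5
        rw [hEsum] at h2
        omega
      omega
    have hNgs : N ∈ GS m u (n - p) := by
      constructor
      · intro x hx
        obtain ⟨t, hti, rfl⟩ := hM₀pw x (by rw [hM₀NQ]; exact Multiset.mem_add.2 (Or.inl hx))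
        have hle := hNle _ hx
        rw [hq₀] at hle
        have htu : t ≤ u := by
          by_contra hc2
          have := Nat.pow_lt_pow_right (show 1 < m by omega) (show u < t by omega)
          omega
        exact ⟨t, htu, rfl⟩
      · exact hQtil
    have hQlo' : ∀ x ∈ Q, ∃ t', u ≤ t' ∧ t' ≤ i ∧ x = m ^ t' := by
      intro x hx
      obtain ⟨t', ht', rfl⟩ := hQpw x hx
      have h1 := hq₀min _ hx
      rw [hq₀] at h1
      have hut : u ≤ t' := by
        by_contra hc2
        have := Nat.pow_lt_pow_right (show 1 < m by omega) (show t' < u by omega)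
        omega
      exact ⟨t', hut, ht', rfl⟩
    have hq₀mem : m ^ u ∈ Q := hq₀ ▸ hq₀Q
    obtain ⟨P, hPmary, hQeq⟩ := qof_surj hm hu hQlo' hq₀mem (by rw [hQsum, hp])
    refine ⟨⟨⟨u, hu⟩, ⟨N, hNgs⟩, ⟨P, hPmary⟩⟩, ?_⟩
    refine Subtype.ext ?_
    show p ::ₘ (N + Qof m u P) = M
    rw [← hQeq, ← hM₀NQ, ← hMM₀]


lemma main_count {m i n : ℕ} (hm : 2 ≤ m) (hi : 2 ≤ i) (hpn : m ^ i ≤ n) :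
    Nat.card ↥(GS m i n) = Nat.card ↥(GS m (i-1) n)
      + (∑ u ∈ Finset.range i,
          Nat.card ↥(GS m u (n - m^i)) * Nat.card ↥(MaryP m (m^(i-u) - m)))
      + Nat.card ↥(GS m i (n - m^i)) := by
  classical
  set S0 := {M ∈ GS m i n | Multiset.count (m ^ i) M = 0} with hS0
  set S1 := {M ∈ GS m i n | Multiset.count (m ^ i) M = 1} with hS1
  set S2 := {M ∈ GS m i n | 2 ≤ Multiset.count (m ^ i) M} with hS2
  have hsub0 : S0 ⊆ GS m i n := fun M hM => hM.1
  have hsub1 : S1 ⊆ GS m i n := fun M hM => hM.1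
  have hsub2 : S2 ⊆ GS m i n := fun M hM => hM.1
  have hfin : (GS m i n).Finite := gs_finite hm
  have hf0 : S0.Finite := hfin.subset hsub0
  have hf1 : S1.Finite := hfin.subset hsub1
  have hf2 : S2.Finite := hfin.subset hsub2
  have hU : GS m i n = (S0 ∪ S1) ∪ S2 := by
    ext M
    simp only [hS0, hS1, hS2, Set.mem_union, Set.mem_setOf_eq]
    constructor
    · intro h
      rcases Nat.lt_or_ge (Multiset.count (m ^ i) M) 1 with hc | hc
      · exact Or.inl (Or.inl ⟨h, by omega⟩)
      · rcases Nat.lt_or_ge (Multiset.count (m ^ i) M) 2 with hc2 | hc2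
        · exact Or.inl (Or.inr ⟨h, by omega⟩)
        · exact Or.inr ⟨h, hc2⟩
    · rintro ((⟨h, _⟩ | ⟨h, _⟩) | ⟨h, _⟩) <;> exact h
  have hd01 : Disjoint S0 S1 := by
    rw [Set.disjoint_left]
    rintro M ⟨_, h0⟩ ⟨_, h1⟩
    omega
  have hd2 : Disjoint (S0 ∪ S1) S2 := by
    rw [Set.disjoint_left]
    rintro M (⟨_, h0⟩ | ⟨_, h1⟩) ⟨_, h2⟩ <;> omega
  have hcard : Nat.card ↥(GS m i n) = S0.ncard + S1.ncard + S2.ncard := by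
    rw [Nat.card_coe_set_eq, hU, Set.ncard_union_eq hd2 (hf0.union hf1) hf2,
      Set.ncard_union_eq hd01 hf0 hf1]
  have h0 : S0.ncard = Nat.card ↥(GS m (i-1) n) := by
    rw [hS0, class0_eq hm (by omega), Nat.card_coe_set_eq]
  have h2c : S2.ncard = Nat.card ↥(GS m i (n - m ^ i)) := by
    obtain ⟨e⟩ := class2_equiv hm hi hpn
    rw [← Nat.card_coe_set_eq]
    exact (Nat.card_congr e).symm
  have h1c : S1.ncard = ∑ u ∈ Finset.range i,
      Nat.card ↥(GS m u (n - m ^ i)) * Nat.card ↥(MaryP m (m^(i-u) - m)) := by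
    obtain ⟨e⟩ := class1_equiv hm hi hpn
    rw [← Nat.card_coe_set_eq, ← Nat.card_congr e]
    haveI i1 : ∀ u : Fin i, Finite ↥(GS m u.1 (n - m ^ i)) := fun u => gsFinite m u.1 (n - m ^ i) hm
    haveI i2 : ∀ u : Fin i, Finite ↥(MaryP m (m ^ (i - u.1) - m)) :=
      fun u => Set.finite_coe_iff.2 (maryp_finite hm)
    haveI f1 : ∀ u : Fin i, Fintype ↥(GS m u.1 (n - m ^ i)) := fun u => Fintype.ofFinite _
    haveI f2 : ∀ u : Fin i, Fintype ↥(MaryP m (m ^ (i - u.1) - m)) := fun u => Fintype.ofFinite _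
    rw [Nat.card_eq_fintype_card, Fintype.card_sigma,
      ← Fin.sum_univ_eq_sum_range
        (fun u => Nat.card ↥(GS m u (n - m ^ i)) * Nat.card ↥(MaryP m (m^(i-u) - m))) i]
    refine Finset.sum_congr rfl ?_
    intro u _
    rw [Fintype.card_prod, Nat.card_eq_fintype_card, Nat.card_eq_fintype_card]
  rw [hcard, h0, h1c, h2c]

end BiRec

/-- `b_{i,0}(2,n) = b_{i-1,0}(2,n) + Σ_{u=0}^{i-1} b_{u,0}(2,n-mⁱ)·b_m(m^{i-u}-m)
  + b_{i,0}(2,n-mⁱ)`, with `b_{u,0}(2,s) = 0` for `s < 0`. -/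
theorem bi0_recurrence (m i : ℕ) (hm : 2 ≤ m) (hi : 2 ≤ i) (n : ℕ) (hn : 1 ≤ n) :
    (bi0 m i n : ℤ) =
      (bi0 m (i - 1) n : ℤ) +
        (∑ u ∈ Finset.range i, bi0Z m u ((n : ℤ) - (m : ℤ) ^ i) *
          (mary m (m ^ (i - u) - m) : ℤ)) +
        bi0Z m i ((n : ℤ) - (m : ℤ) ^ i) := by
  by_cases hpn : m ^ i ≤ n
  · have hz : ((n : ℤ) - (m : ℤ) ^ i) = ((n - m ^ i : ℕ) : ℤ) := by
      have : ((m ^ i : ℕ) : ℤ) = (m : ℤ) ^ i := by push_cast; ring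
      omega
    have hzn : ¬ ((n : ℤ) - (m : ℤ) ^ i < 0) := by
      rw [hz]
      simp
    have hbz : ∀ u, bi0Z m u ((n : ℤ) - (m : ℤ) ^ i) = (bi0 m u (n - m ^ i) : ℤ) := by
      intro u
      rw [bi0Z, if_neg hzn, hz, Int.toNat_natCast]
    simp only [hbz]
    have hnat2 : bi0 m i n = bi0 m (i-1) n
        + (∑ u ∈ Finset.range i, bi0 m u (n - m^i) * mary m (m^(i-u) - m))
        + bi0 m i (n - m^i) := by
      rw [BiRec.partA m i n hm, BiRec.partA m (i-1) n hm, BiRec.partA m i (n - m^i) hm,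
        BiRec.main_count hm hi hpn]
      congr 2
      refine Finset.sum_congr rfl ?_
      intro u hu
      rw [BiRec.partA m u (n - m^i) hm, BiRec.mary_eq m _ hm]
    rw [hnat2]
    push_cast
    ring
  · push_neg at hpn
    have hzn : ((n : ℤ) - (m : ℤ) ^ i < 0) := by
      have h1 : ((m ^ i : ℕ) : ℤ) = (m : ℤ) ^ i := by push_cast; ring
      omega
    have hb : ∀ u, bi0Z m u ((n : ℤ) - (m : ℤ) ^ i) = 0 := fun u => if_pos hzn
    simp only [hb, zero_mul, Finset.sum_const_zero, add_zero]
    have heq : bi0 m i n = bi0 m (i-1) n := by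
      rw [BiRec.partA m i n hm, BiRec.partA m (i-1) n hm]
      have hset : BiRec.GS m i n = BiRec.GS m (i-1) n := by
        rw [← BiRec.class0_eq hm (by omega)]
        ext M
        simp only [Set.mem_setOf_eq]
        constructor
        · intro h
          refine ⟨h, ?_⟩
          rw [Multiset.count_eq_zero]
          intro hmem
          have := BiRec.pow_mem_til (k := 0) hm hi h hmem
          omega
        · exact fun h => h.1
      rw [hset]
    rw [heq]
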